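/- arXiv:1510.02807 — 6 statements merged into one kernel-verified Lean document; each statement's English description precedes it below -/
import Mathlib

section
/- Let a ≥ 2 be an integer and let w = φ^∞(0) be the fixed point of φ(n) = 0^{a−1}·(n+1) on ℕ. Then w is a-power-free: no factor of w is of the form v^a for a nonempty word v. -/
/-- The `a/b`-power of a word `v` (whose length should be divisible by `b`):
`⌊a/b⌋` copies of `v` followed by the prefix of `v` of length `|v|·(a mod b)/b`. -/
def abPow (a b : ℕ) (v : List ℕ) : List ℕ :=
  (List.replicate (a / b) v).flatten ++ v.take (v.length * (a % b) / b)

/-- `w` is an `a/b`-power. -/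
def IsAbPower (a b : ℕ) (w : List ℕ) : Prop :=
  ∃ v : List ℕ, v ≠ [] ∧ b ∣ v.length ∧ w = abPow a b v

/-- A finite word is `a/b`-power-free if none of its factors is an `a/b`-power. -/
def AbPowerFree (a b : ℕ) (w : List ℕ) : Prop :=
  ∀ f : List ℕ, f <:+: w → ¬ IsAbPower a b f

/-- `f` is a factor of the infinite word `w`. -/
def InfFactor (w : ℕ → ℕ) (f : List ℕ) : Prop :=
  ∃ i : ℕ, f = (List.range f.length).map fun j => w (i + j)

/-- An infinite word is `a/b`-power-free if none of its factors is an `a/b`-power. -/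
def AbPowerFreeSeq (a b : ℕ) (w : ℕ → ℕ) : Prop :=
  ∀ f : List ℕ, InfFactor w f → ¬ IsAbPower a b f


lemma rep_flat_len (v : List ℕ) (k : ℕ) : (List.replicate k v).flatten.length = k * v.length := by
  simp [List.length_flatten]

lemma rep_flat_get (v : List ℕ) (k j : ℕ) (hj : j < k * v.length) :
    (List.replicate k v).flatten[j]? = v[j % v.length]? := by
  induction k generalizing j with
  | zero => simp at hj
  | succ k ih =>
    have hv : 0 < v.length := by
      rcases Nat.eq_zero_or_pos v.length with h | h
      · simp [h] at hj
      · exact h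
    rw [List.replicate_succ, List.flatten_cons]
    by_cases h : j < v.length
    · rw [List.getElem?_append]
      simp only [h, if_true]
      rw [Nat.mod_eq_of_lt h]
    · push_neg at h
      rw [List.getElem?_append]
      simp only [Nat.not_lt.mpr h, if_false]
      have hj2 : j - v.length < k * v.length := by
        have h4 : (k+1) * v.length = k * v.length + v.length := by ring
        omega
      rw [ih (j - v.length) hj2, Nat.mod_eq_sub_mod h]

lemma w_char (a : ℕ) (ha : 2 ≤ a) (w : ℕ → ℕ)
    (h0 : ∀ i r : ℕ, r ≤ a - 2 → w (a * i + r) = 0)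
    (h1 : ∀ i : ℕ, w (a * i + (a - 1)) = w i + 1) (n : ℕ) :
    w n ≠ 0 ↔ n % a = a - 1 := by
  have hd := Nat.div_add_mod n a
  have hm : n % a < a := Nat.mod_lt _ (by omega)
  constructor
  · intro hne
    by_contra hc
    apply hne
    have : w (a * (n / a) + n % a) = 0 := h0 _ _ (by omega)
    rwa [hd] at this
  · intro hc
    have : w (a * (n / a) + (a - 1)) = w (n / a) + 1 := h1 _
    rw [← hc, hd] at this
    omega


def InfFactor' (w : ℕ → ℕ) (f : List ℕ) : Prop :=
  ∃ i : ℕ, f = (List.range f.length).map fun j => w (i + j)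

lemma main_ind (a : ℕ) (ha : 2 ≤ a) (w : ℕ → ℕ)
    (h0 : ∀ i r : ℕ, r ≤ a - 2 → w (a * i + r) = 0)
    (h1 : ∀ i : ℕ, w (a * i + (a - 1)) = w i + 1) :
    ∀ n : ℕ, ∀ v : List ℕ, v.length = n → v ≠ [] →
      ¬ InfFactor' w ((List.replicate a v).flatten) := by
  intro n
  induction n using Nat.strong_induction_on with
  | _ n ih =>
  rintro v hlen hv ⟨i, hfac⟩
  set N := v.length with hN
  have hN0 : 0 < N := List.length_pos_iff.mpr hv
  have haN : a ≤ a * N := Nat.le_mul_of_pos_right a hN0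
  have Llen : (List.replicate a v).flatten.length = a * N := rep_flat_len v a
  have key0 : ∀ j, j < a * N → v[j % N]? = some (w (i + j)) := by
    intro j hj
    have e := congrArg (fun l => l[j]?) hfac
    rw [rep_flat_get v a j (by rwa [← hN]), Llen] at e
    rw [e, List.getElem?_map, List.getElem?_eq_getElem (by simpa using hj)]
    simp
  have key : ∀ j j', j < a * N → j' < a * N → j % N = j' % N →
      w (i + j) = w (i + j') := by
    intro j j' hj hj' hmod
    have e1 := key0 j hj
    have e2 := key0 j' hj'
    rw [hmod, e2] at e1
    exact ((Option.some.injEq _ _).mp e1).symm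
  -- division setup
  have hra : i % a < a := Nat.mod_lt _ (by omega)
  set r := i % a with hr
  set q := i / a with hq
  have hPQ : a * q + r = i := Nat.div_add_mod i a
  set j0 := a - 1 - r with hj0
  have halign0 : i + j0 = a * q + (a - 1) := by omega
  have hnz0 : w (i + j0) ≠ 0 := by
    rw [halign0, h1 q]; omega
  have hj0a : j0 < a := by omega
  rcases Nat.lt_or_ge N 2 with hN1 | hN2
  · -- N = 1
    set j1 := (j0 + 1) % a with hj1
    have hj1a : j1 < a := Nat.mod_lt _ (by omega)
    have heq : w (i + j0) = w (i + j1) := key j0 j1 (by omega) (by omega) (by rw [show N = 1 by omega]; omega)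
    have hz1 : w (i + j1) = 0 := by
      by_contra hc
      have hch := (w_char a ha w h0 h1 (i + j1)).mp hc
      have e2 : (i + j1) % a = (i + (j0 + 1)) % a := Nat.add_mod_mod i (j0 + 1) a
      have e3 : i + (j0 + 1) = a * (q + 1) := by
        have : a * (q + 1) = a * q + a := by ring
        omega
      rw [e2, e3, Nat.mul_mod_right] at hch
      omega
    exact hnz0 (heq.trans hz1)
  · -- N ≥ 2
    have hNa : a - 1 + N < a * N := by
      have h8 : 2 * (N - 1) ≤ a * (N - 1) := Nat.mul_le_mul_right _ ha
      have h9 : a * ((N - 1) + 1) = a * (N - 1) + a := by ring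
      rw [show (N - 1) + 1 = N by omega] at h9
      omega
    have hdvd : a ∣ N := by
      by_contra hnd
      have hs : N % a ≠ 0 := fun h => hnd (Nat.dvd_of_mod_eq_zero h)
      have hsa : N % a < a := Nat.mod_lt _ (by omega)
      have hper : w (i + j0) = w (i + (j0 + N)) :=
        key j0 (j0 + N) (by omega) (by omega)
          (by rw [Nat.add_mod_right])
      have hz : w (i + (j0 + N)) = 0 := by
        by_contra hc
        have hch := (w_char a ha w h0 h1 (i + (j0 + N))).mp hc
        have e2 : (i + (j0 + N)) % a = (a - 1 + N) % a := by
          rw [← Nat.add_assoc, ← Nat.mod_add_mod, show (i + j0) % a = a - 1 by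
            rw [halign0, Nat.mul_add_mod, Nat.mod_eq_of_lt (by omega)]]
        have e3 : (a - 1 + N) % a = (a - 1 + N % a) % a := by rw [Nat.add_mod_mod]
        have e4 : (a - 1 + N % a) % a = N % a - 1 := by
          rw [Nat.mod_eq_sub_mod (by omega), show a - 1 + N % a - a = N % a - 1 by omega,
            Nat.mod_eq_of_lt (by omega)]
        rw [e2, e3, e4] at hch
        omega
      exact hnz0 (hper.trans hz)
    obtain ⟨m, hm⟩ := hdvd
    have hm0 : 0 < m := by
      rcases Nat.eq_zero_or_pos m with h | h
      · subst h; simp at hm; omega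
      · exact h
    have hmN : 2 * m ≤ a * m := Nat.mul_le_mul_right m ha
    -- second-level periodicity
    have per2 : ∀ t, t + m < a * m → w (q + t) = w (q + t + m) := by
      intro t ht
      have halt : ∀ s : ℕ, i + (j0 + a * s) = a * (q + s) + (a - 1) := by
        intro s
        have h5 : a * (q + s) = a * q + a * s := by ring
        omega
      have hjt : j0 + a * (t + m) < a * N := by
        have h6 : a * (t + m) + a ≤ a * (a * m) := by
          calc a * (t + m) + a = a * (t + m + 1) := by ring
          _ ≤ a * (a * m) := Nat.mul_le_mul_left a (by omega)
        rw [hm]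
        omega
      have hjt' : j0 + a * t < a * N := by
        have h7 : a * t ≤ a * (t + m) := Nat.mul_le_mul_left a (by omega)
        omega
      have hmod : (j0 + a * t) % N = (j0 + a * (t + m)) % N := by
        rw [show j0 + a * (t + m) = j0 + a * t + a * m by ring, ← hm, Nat.add_mod_right]
      have hp := key (j0 + a * t) (j0 + a * (t + m)) hjt' hjt hmod
      rw [halt t, halt (t + m), h1, h1, show q + (t + m) = q + t + m by ring] at hp
      omega
    -- full m-periodicity
    have per3 : ∀ j, j < a * m → w (q + j) = w (q + j % m) := by
      intro j
      induction j using Nat.strong_induction_on with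
      | _ j ihj =>
      intro hj
      by_cases hjm : j < m
      · rw [Nat.mod_eq_of_lt hjm]
      · push_neg at hjm
        have h7 : w (q + (j - m)) = w (q + (j - m) + m) := per2 (j - m) (by omega)
        rw [show q + (j - m) + m = q + j by omega] at h7
        rw [h7.symm, ihj (j - m) (by omega) (by omega), Nat.mod_eq_sub_mod hjm]
    -- construct shorter counterexample
    set v' := (List.range m).map fun s => w (q + s) with hv'
    have hv'len : v'.length = m := by simp [hv']
    have hv'ne : v' ≠ [] := by
      intro h
      have := congrArg List.length h
      simp only [hv'len, List.length_nil] at this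
      omega
    apply ih m (by omega) v' hv'len hv'ne
    refine ⟨q, ?_⟩
    have hlen2 : (List.replicate a v').flatten.length = a * m := by
      rw [rep_flat_len, hv'len]
    rw [hlen2]
    apply List.ext_getElem?
    intro j
    by_cases hj : j < a * m
    · rw [rep_flat_get v' a j (by rwa [hv'len]), hv'len]
      have hjm : j % m < m := Nat.mod_lt _ hm0
      rw [List.getElem?_map, List.getElem?_eq_getElem (by simpa using hjm)]
      rw [List.getElem?_map, List.getElem?_eq_getElem (by simpa using hj)]
      simp only [List.getElem_range, Option.map_some]
      rw [(per3 j hj).symm]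
    · push_neg at hj
      rw [List.getElem?_eq_none, List.getElem?_eq_none]
      · simpa using hj
      · rw [rep_flat_len, hv'len]; exact hj

theorem fixedPoint_a_power_free (a : ℕ) (ha : 2 ≤ a) (w : ℕ → ℕ)
    (h0 : ∀ i r : ℕ, r ≤ a - 2 → w (a * i + r) = 0)
    (h1 : ∀ i : ℕ, w (a * i + (a - 1)) = w i + 1) :
    ∀ v : List ℕ, v ≠ [] → ¬ InfFactor w ((List.replicate a v).flatten) := by
  intro v hv hf
  exact main_ind a ha w h0 h1 v.length v rfl hv hf
end

section
/- Let s, t, m_max be non-negative integers with s ≠ 0, and let I_min, I_max be rationals with 1 < I_min < I_max ≤ 2. Let a_min be the minimum over all a ≥ 1 such that there exists b ≥ 1 with gcd(b, s) = 1 and I_min < a/b < I_max. Assume m_max ≤ (s − t/I_min)·(a_min − 2). Let a, b be relatively prime positive integers with I_min < a/b < I_max and gcd(b, s) = 1, and set k = s·a − t·b. Then k > 0 and ⌈(m_max·a − 1)/k⌉ + 1 ≤ a − 1. -/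
theorem ceil_bound (s t mmax : ℕ) (hs : s ≠ 0) (Imin Imax : ℚ)
    (h1 : 1 < Imin) (h2 : Imin < Imax) (h3 : Imax ≤ 2) (amin : ℕ)
    (hamin1 : 1 ≤ amin)
    (hamin2 : ∃ b : ℕ, 1 ≤ b ∧ Nat.gcd b s = 1 ∧
      Imin < (amin : ℚ) / b ∧ (amin : ℚ) / b < Imax)
    (hamin3 : ∀ a' : ℕ, 1 ≤ a' →
      (∃ b : ℕ, 1 ≤ b ∧ Nat.gcd b s = 1 ∧ Imin < (a' : ℚ) / b ∧ (a' : ℚ) / b < Imax) →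
      amin ≤ a')
    (hmmax : (mmax : ℚ) ≤ ((s : ℚ) - t / Imin) * ((amin : ℚ) - 2))
    (a b : ℕ) (ha : 0 < a) (hb : 0 < b) (hcop : Nat.Coprime a b)
    (hab1 : Imin < (a : ℚ) / b) (hab2 : (a : ℚ) / b < Imax) (hbs : Nat.gcd b s = 1)
    (k : ℤ) (hk : k = (s : ℤ) * a - (t : ℤ) * b) :
    0 < k ∧ ⌈((mmax : ℚ) * a - 1) / (k : ℚ)⌉ + 1 ≤ (a : ℤ) - 1 := by
  have hI0 : (0:ℚ) < Imin := lt_trans one_pos h1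
  have hbQ : (0:ℚ) < (b:ℚ) := by exact_mod_cast hb
  have hA : Imin * b < a := by rwa [lt_div_iff₀ hbQ] at hab1
  have hB : (a:ℚ) < 2 * b := by
    have := lt_of_lt_of_le hab2 h3
    rwa [div_lt_iff₀ hbQ] at this
  -- amin ≤ a
  have hamina : amin ≤ a := hamin3 a ha ⟨b, hb, hbs, hab1, hab2⟩
  -- amin ≥ 3
  obtain ⟨b', hb', hb's, h1', h2'⟩ := hamin2
  have hb'Q : (0:ℚ) < (b':ℚ) := by exact_mod_cast hb'
  have hA' : Imin * b' < amin := by rwa [lt_div_iff₀ hb'Q] at h1'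
  have hB' : (amin:ℚ) < 2 * b' := by
    have := lt_of_lt_of_le h2' h3
    rwa [div_lt_iff₀ hb'Q] at this
  have hlt1 : b' < amin := by
    have : (b':ℚ) < amin := by nlinarith
    exact_mod_cast this
  have hlt2 : amin < 2 * b' := by exact_mod_cast hB'
  have hamin3' : 3 ≤ amin := by omega
  have haminQ : (3:ℚ) ≤ amin := by exact_mod_cast hamin3'
  have haQ : (3:ℚ) ≤ a := by exact_mod_cast le_trans hamin3' hamina
  have haminaQ : (amin:ℚ) ≤ a := by exact_mod_cast hamina
  have htQ : (0:ℚ) ≤ t := Nat.cast_nonneg t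
  have hsQ : (0:ℚ) ≤ s := Nat.cast_nonneg s
  have hmQ : (0:ℚ) ≤ mmax := Nat.cast_nonneg mmax
  have hs1 : (1:ℚ) ≤ s := by exact_mod_cast Nat.one_le_iff_ne_zero.mpr hs
  -- nonnegativity of s - t/Imin : equivalently s*Imin - t ≥ 0
  have hq : (t:ℚ) / Imin * Imin = (t:ℚ) := div_mul_cancel₀ _ (ne_of_gt hI0)
  have hnn : 0 ≤ (s:ℚ) - t / Imin := by
    by_contra h
    push_neg at h
    have hneg : ((s:ℚ) - t / Imin) * ((amin:ℚ) - 2) < 0 :=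
      mul_neg_of_neg_of_pos h (by linarith)
    linarith
  have hu : 0 ≤ (s:ℚ) * Imin - t := by
    have h0 := mul_nonneg hnn (le_of_lt hI0)
    have h1 : ((s:ℚ) - t / Imin) * Imin = (s:ℚ) * Imin - t := by rw [sub_mul, hq]
    linarith
  -- k > 0
  have hkQ : (t:ℚ) * b < s * a := by nlinarith
  have hkpos : 0 < k := by
    rw [hk]
    have : (t:ℤ) * b < s * a := by exact_mod_cast hkQ
    omega
  refine ⟨hkpos, ?_⟩
  -- key inequality: mmax * a ≤ (s*a - t*b) * (a-2)
  have hmmax' : (mmax:ℚ) * Imin ≤ ((s:ℚ) * Imin - t) * ((amin:ℚ) - 2) := by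
    have h0 := mul_le_mul_of_nonneg_right hmmax (le_of_lt hI0)
    have h1 : ((s:ℚ) - t / Imin) * ((amin:ℚ) - 2) * Imin
        = ((s:ℚ) * Imin - t) * ((amin:ℚ) - 2) := by
      rw [show ((s:ℚ) - t / Imin) * ((amin:ℚ) - 2) * Imin
          = ((s:ℚ) - t / Imin) * Imin * ((amin:ℚ) - 2) by ring, sub_mul, hq]
    linarith
  have hkey : (mmax:ℚ) * a ≤ ((s:ℚ) * a - t * b) * ((a:ℚ) - 2) := by
    have h4 : ((s:ℚ) * Imin - t) * ((amin:ℚ) - 2) ≤ ((s:ℚ) * Imin - t) * ((a:ℚ) - 2) :=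
      mul_le_mul_of_nonneg_left (by linarith) hu
    have h5 : ((mmax:ℚ) * Imin) * a ≤ (((s:ℚ) * Imin - t) * ((a:ℚ) - 2)) * a :=
      mul_le_mul_of_nonneg_right (le_trans hmmax' h4) (by linarith)
    have h6a : (t:ℚ) * (Imin * b) ≤ (t:ℚ) * a :=
      mul_le_mul_of_nonneg_left (le_of_lt hA) htQ
    have h6 : ((s:ℚ) * Imin - t) * a ≤ Imin * ((s:ℚ) * a - t * b) := by linarith
    have h8 : Imin * ((mmax:ℚ) * a) ≤ Imin * (((s:ℚ) * a - t * b) * ((a:ℚ) - 2)) := by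
      calc Imin * ((mmax:ℚ) * a) = ((mmax:ℚ) * Imin) * a := by ring
        _ ≤ (((s:ℚ) * Imin - t) * ((a:ℚ) - 2)) * a := h5
        _ = (((s:ℚ) * Imin - t) * a) * ((a:ℚ) - 2) := by ring
        _ ≤ (Imin * ((s:ℚ) * a - t * b)) * ((a:ℚ) - 2) :=
            mul_le_mul_of_nonneg_right h6 (by linarith)
        _ = Imin * (((s:ℚ) * a - t * b) * ((a:ℚ) - 2)) := by ring
    exact le_of_mul_le_mul_left h8 hI0
  have hkQ' : (0:ℚ) < (k:ℚ) := by exact_mod_cast hkpos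
  have hkcast : ((k:ℚ)) = (s:ℚ) * a - t * b := by
    rw [hk]; push_cast; ring
  have hceil : ⌈((mmax : ℚ) * a - 1) / (k : ℚ)⌉ ≤ (a:ℤ) - 2 := by
    rw [Int.ceil_le]
    rw [div_le_iff₀ hkQ']
    push_cast
    rw [hkcast]
    linarith [hkey]
  omega
end

section
/- Let k ≥ 2 and d ≥ 0 be integers, let u be a word over ℕ of length k − 1 with letters u(0), …, u(k−2), and let φ be the k-uniform morphism on ℕ defined by φ(n) = u·(n+d). Suppose that for all n ≥ 0 the word u·(n+d) is not a perfect power (not of the form z^e with e ≥ 2). Then φ locates words of length k: for every word x of length k over ℕ there exists j with 0 ≤ j ≤ k−1 such that for every finite word w over ℕ, every occurrence of x as a factor of φ(w) begins at a position congruent to j modulo k. -/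
/-- Apply a morphism on `ℕ` to a finite word, by concatenation. -/
def morphApply (φ : ℕ → List ℕ) (w : List ℕ) : List ℕ := (w.map φ).flatten

/-- A `k`-uniform morphism `φ` locates words of length `ℓ`: every word of length `ℓ`
occurs in images `φ(w)` only at positions in a single residue class mod `k`. -/
def Locates (φ : ℕ → List ℕ) (k ℓ : ℕ) : Prop :=
  ∀ x : List ℕ, x.length = ℓ →
    ∃ j, ∀ w y z : List ℕ, morphApply φ w = y ++ x ++ z → y.length % k = j

lemma join_rep_add (e f : ℕ) (z : List ℕ) :
    (List.replicate (e + f) z).flatten =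
      (List.replicate e z).flatten ++ (List.replicate f z).flatten := by
  rw [List.replicate_add]
  exact List.flatten_append

/-- Lyndon–Schützenberger style lemma: commuting nonempty words are powers of a
common word. -/
lemma comm_pow : ∀ (N : ℕ) (s t : List ℕ), s.length + t.length ≤ N →
    s ++ t = t ++ s → s ≠ [] → t ≠ [] →
    ∃ (z : List ℕ) (e f : ℕ), z ≠ [] ∧ 1 ≤ e ∧ 1 ≤ f ∧
      s = (List.replicate e z).flatten ∧ t = (List.replicate f z).flatten := by
  intro N
  induction N with
  | zero =>
    intro s t h hc hs ht
    exfalso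
    have := List.length_pos_iff.mpr hs
    omega
  | succ N ih =>
    intro s t hlen hc hs ht
    rcases le_total t.length s.length with hle | hle
    · have hpre : t <+: s := by
        refine List.prefix_of_prefix_length_le ?_ (List.prefix_append s t) hle
        rw [hc]; exact List.prefix_append t s
      obtain ⟨s', rfl⟩ := hpre
      by_cases hs' : s' = []
      · subst hs'
        exact ⟨t, 1, 1, ht, le_rfl, le_rfl, by simp, by simp⟩
      · have hc' : s' ++ t = t ++ s' := by
          have h2 : t ++ (s' ++ t) = t ++ (t ++ s') := by
            simpa [List.append_assoc] using hc
          exact List.append_cancel_left h2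
        have hl : s'.length + t.length ≤ N := by
          have := List.length_pos_iff.mpr ht
          simp only [List.length_append] at hlen
          omega
        obtain ⟨z, e, f, hz, he, hf, h1, h2⟩ := ih s' t hl hc' hs' ht
        refine ⟨z, f + e, f, hz, by omega, hf, ?_, h2⟩
        rw [join_rep_add, ← h1, ← h2]
    · have hpre : s <+: t := by
        refine List.prefix_of_prefix_length_le (List.prefix_append s t) ?_ hle
        rw [hc]; exact List.prefix_append t s
      obtain ⟨t', rfl⟩ := hpre
      by_cases ht' : t' = []
      · subst ht'
        exact ⟨s, 1, 1, hs, le_rfl, le_rfl, by simp, by simp⟩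
      · have hc' : s ++ t' = t' ++ s := by
          have h2 : s ++ (s ++ t') = s ++ (t' ++ s) := by
            simpa [List.append_assoc] using hc
          exact List.append_cancel_left h2
        have hl : s.length + t'.length ≤ N := by
          have := List.length_pos_iff.mpr hs
          simp only [List.length_append] at hlen
          omega
        obtain ⟨z, e, f, hz, he, hf, h1, h2⟩ := ih s t' hl hc' hs ht'
        refine ⟨z, e, e + f, hz, he, by omega, h1, ?_⟩
        rw [join_rep_add, ← h1, ← h2]

/-- If a nonempty list equals a nontrivial rotation of itself, it is a perfect power. -/
lemma pow_of_rotate_self (v : List ℕ) (m : ℕ) (hm0 : 0 < m) (hmk : m < v.length)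
    (hrot : v.rotate m = v) :
    ∃ (z : List ℕ) (e : ℕ), 2 ≤ e ∧ z ≠ [] ∧ v = (List.replicate e z).flatten := by
  set t := v.take m with htdef
  set s := v.drop m with hsdef
  have hts : t ++ s = v := List.take_append_drop m v
  have hst : s ++ t = v := by
    rw [← List.rotate_eq_drop_append_take (le_of_lt hmk)]
    exact hrot
  have hcomm : s ++ t = t ++ s := by rw [hst, hts]
  have hsne : s ≠ [] := by
    have hl : s.length = v.length - m := by simp [hsdef]
    intro h
    rw [h] at hl
    simp at hl
    omega
  have htne : t ≠ [] := by
    have hl : t.length = m := by simp [htdef]; omega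
    intro h
    rw [h] at hl
    simp at hl
    omega
  obtain ⟨z, e, f, hz, he, hf, h1, h2⟩ :=
    comm_pow (s.length + t.length) s t le_rfl hcomm hsne htne
  refine ⟨z, f + e, ?_, hz, ?_⟩
  · omega
  · rw [← hts, join_rep_add, ← h1, ← h2]

lemma rot_unique (k d : ℕ) (hk : 2 ≤ k) (u : List ℕ) (hu : u.length = k - 1)
    (hnp : ∀ n : ℕ, ¬ ∃ (z : List ℕ) (e : ℕ), 2 ≤ e ∧ z ≠ [] ∧
      u ++ [n + d] = (List.replicate e z).flatten)
    (a a' r r' : ℕ) (hr : r < k) (hr' : r' < k)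
    (h : (u ++ [a + d]).rotate r = (u ++ [a' + d]).rotate r') : r = r' := by
  by_contra hne
  set v := u ++ [a + d] with hv
  set v' := u ++ [a' + d] with hv'
  have hvl : v.length = k := by simp [hv]; omega
  have hv'l : v'.length = k := by simp [hv']; omega
  have hrot : v.rotate (r + (k - r')) = v' := by
    have h2 := congrArg (fun l => l.rotate (k - r')) h
    simp only [List.rotate_rotate] at h2
    rw [h2]
    have h3 : r' + (k - r') = k := by omega
    rw [h3, ← hv'l, List.rotate_length]
  have hperm : v'.Perm v := by
    rw [← hrot]; exact List.rotate_perm v (r + (k - r'))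
  have heq : a' + d = a + d := by
    by_contra hne2
    have hcnt := hperm.count_eq (a + d)
    simp [hv, hv', List.count_append, List.count_singleton, hne2] at hcnt
    omega
  have hvv : v' = v := by rw [hv, hv', heq]
  rw [hvv] at hrot
  -- extract a rotation amount in (0, k)
  have key : ∃ m, 0 < m ∧ m < k ∧ v.rotate m = v := by
    rcases le_or_gt r' r with hle | hlt
    · refine ⟨r - r', by omega, by omega, ?_⟩
      have h4 : r + (k - r') = k + (r - r') := by omega
      rw [h4] at hrot
      calc v.rotate (r - r') = (v.rotate k).rotate (r - r') := by
              rw [← hvl, List.rotate_length]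
        _ = v.rotate (k + (r - r')) := List.rotate_rotate v k (r - r')
        _ = v := hrot
    · exact ⟨r + (k - r'), by omega, by omega, hrot⟩
  obtain ⟨m, hm0, hmk, hrotm⟩ := key
  obtain ⟨z, e, hze, hzne, hzeq⟩ := pow_of_rotate_self v m hm0 (by omega) hrotm
  exact hnp a ⟨z, e, hze, hzne, hzeq⟩

lemma occ_rotate (k d : ℕ) (hk : 2 ≤ k) (u : List ℕ) (hu : u.length = k - 1)
    (φ : ℕ → List ℕ) (hφ : ∀ n : ℕ, φ n = u ++ [n + d]) :
    ∀ (w y x z : List ℕ), x.length = k → morphApply φ w = y ++ x ++ z →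
      ∃ a, x = (u ++ [a + d]).rotate (y.length % k) := by
  have hlen : ∀ n, (φ n).length = k := by
    intro n; rw [hφ]; simp [hu]; omega
  intro w
  induction w with
  | nil =>
    intro y x z hx hw
    exfalso
    have := congrArg List.length hw
    simp [morphApply, hx] at this
    omega
  | cons n w ih =>
    intro y x z hx hw
    have hM : morphApply φ (n :: w) = φ n ++ morphApply φ w := by
      simp [morphApply]
    rw [hM] at hw
    rcases Nat.lt_or_ge y.length k with hyk | hyk
    · rcases Nat.eq_zero_or_pos y.length with hy0 | hy0
      · -- occurrence at a block boundary: x is exactly φ n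
        have hy : y = [] := List.length_eq_zero_iff.mp hy0
        subst hy
        simp only [List.nil_append] at hw
        have hxφ : φ n = x := by
          refine List.append_inj_left hw ?_
          rw [hlen, hx]
        refine ⟨n, ?_⟩
        simp only [List.length_nil, Nat.zero_mod, List.rotate_zero]
        rw [← hφ n]
        exact hxφ.symm
      · -- occurrence straddling two blocks
        set r := y.length with hrdef
        cases w with
        | nil =>
          exfalso
          have := congrArg List.length hw
          simp [morphApply, hlen, hx] at this
          omega
        | cons m w' =>
          refine ⟨n, ?_⟩
          -- y is a proper prefix of φ n
          have h1 : y <+: φ n := by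
            refine List.prefix_of_prefix_length_le ?_
              (List.prefix_append (φ n) (morphApply φ (m :: w'))) ?_
            · exact ⟨x ++ z, by rw [← List.append_assoc, hw]⟩
            · rw [hlen]; omega
          obtain ⟨p, hp⟩ := h1
          have hpl : p.length = k - r := by
            have := congrArg List.length hp
            simp [hlen] at this
            omega
          rw [← hp] at hw
          have hw2 : p ++ morphApply φ (m :: w') = x ++ z := by
            have := hw
            rw [List.append_assoc, List.append_assoc] at this
            exact List.append_cancel_left this
          have h2 : p <+: x := by
            refine List.prefix_of_prefix_length_le ?_ (List.prefix_append x z) ?_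
            · exact ⟨morphApply φ (m :: w'), by rw [hw2]⟩
            · omega
          obtain ⟨q, hq⟩ := h2
          have hql : q.length = r := by
            have := congrArg List.length hq
            rw [List.length_append, hx] at this
            omega
          have hw3 : morphApply φ (m :: w') = q ++ z := by
            rw [← hq, List.append_assoc] at hw2
            exact List.append_cancel_left hw2
          have hMm : morphApply φ (m :: w') = φ m ++ morphApply φ w' := by
            simp [morphApply]
          have h3 : q <+: φ m := by
            refine List.prefix_of_prefix_length_le ?_
              (List.prefix_append (φ m) (morphApply φ w')) ?_
            · exact ⟨z, by rw [← hw3, hMm]⟩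
            · rw [hlen]; omega
          -- now x = p ++ q with p = (φ n).drop r, q = (φ m).take r
          have hpval : p = (φ n).drop r := by
            have := congrArg (List.drop r) hp
            rwa [hrdef, List.drop_left] at this
          have hqval : q = (φ m).take r := by
            have := List.prefix_iff_eq_take.mp h3
            rwa [hql] at this
          have hxval : x = ((φ n).drop r) ++ ((φ m).take r) := by
            rw [← hq, hpval, hqval]
          have hrk : r % k = r := Nat.mod_eq_of_lt hyk
          rw [hrk, hxval, hφ n, hφ m]
          rw [List.rotate_eq_drop_append_take (by simp [hu]; omega)]
          have hd : (u ++ [n + d]).drop r = u.drop r ++ [n + d] := by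
            rw [List.drop_append]
            have : r - u.length = 0 := by omega
            rw [this, List.drop_zero]
          have ht : ∀ c : ℕ, (u ++ [c]).take r = u.take r := by
            intro c
            rw [List.take_append]
            have : r - u.length = 0 := by omega
            rw [this, List.take_zero, List.append_nil]
          rw [hd, ht, ht]
    · -- y extends past the first block: recurse
      have h1 : φ n <+: y := by
        refine List.prefix_of_prefix_length_le
          (List.prefix_append (φ n) (morphApply φ w)) ?_ ?_
        · exact ⟨x ++ z, by rw [← List.append_assoc, hw]⟩
        · rw [hlen]; omega
      obtain ⟨y', hy'⟩ := h1
      rw [← hy'] at hw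
      have hw2 : morphApply φ w = y' ++ x ++ z := by
        have h5 : φ n ++ morphApply φ w = φ n ++ (y' ++ (x ++ z)) := by
          simpa [List.append_assoc] using hw
        have h6 := List.append_cancel_left h5
        simpa [List.append_assoc] using h6
      obtain ⟨a, ha⟩ := ih y' x z hx hw2
      refine ⟨a, ?_⟩
      have : y.length % k = y'.length % k := by
        rw [← hy', List.length_append, hlen, Nat.add_mod_left]
      rw [this]
      exact ha

theorem locates_of_not_power (k d : ℕ) (hk : 2 ≤ k) (u : List ℕ)
    (hu : u.length = k - 1)
    (φ : ℕ → List ℕ) (hφ : ∀ n : ℕ, φ n = u ++ [n + d])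
    (hnp : ∀ n : ℕ, ¬ ∃ (z : List ℕ) (e : ℕ), 2 ≤ e ∧ z ≠ [] ∧
      u ++ [n + d] = (List.replicate e z).flatten) :
    ∀ x : List ℕ, x.length = k →
      ∃ j < k, ∀ w y z : List ℕ, morphApply φ w = y ++ x ++ z → y.length % k = j := by
  intro x hx
  by_cases h : ∃ w y z : List ℕ, morphApply φ w = y ++ x ++ z
  · obtain ⟨w0, y0, z0, h0⟩ := h
    refine ⟨y0.length % k, Nat.mod_lt _ (by omega), ?_⟩
    intro w y z hw
    obtain ⟨a, ha⟩ := occ_rotate k d hk u hu φ hφ w y x z hx hw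
    obtain ⟨a0, ha0⟩ := occ_rotate k d hk u hu φ hφ w0 y0 x z0 hx h0
    exact rot_unique k d hk u hu hnp a a0 _ _ (Nat.mod_lt _ (by omega))
      (Nat.mod_lt _ (by omega)) (by rw [← ha, ← ha0])
  · exact ⟨0, by omega, fun w y z hw => absurd ⟨w, y, z, hw⟩ h⟩
end

section
/- Let a, b be relatively prime positive integers with 5/3 ≤ a/b < 2 and b odd, and let φ be the (2a−b)-uniform morphism on ℕ given by φ(n) = 0^{a−1} · 1 · 0^{a−b−1} · (n+1). Then for every finite word w over ℕ, the image φ(w) contains no a/b-power factor of length a. -/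
theorem no_short_abPower_in_image (a b : ℕ) (ha : 0 < a) (hb : 0 < b)
    (hcop : Nat.Coprime a b) (h1 : 5 * b ≤ 3 * a) (h2 : a < 2 * b) (hbodd : b % 2 = 1)
    (φ : ℕ → List ℕ)
    (hφ : ∀ n : ℕ, φ n = List.replicate (a - 1) 0 ++ [1] ++
      List.replicate (a - b - 1) 0 ++ [n + 1]) :
    ∀ (w f : List ℕ), f <:+: morphApply φ w → f.length = a → ¬ IsAbPower a b f := by
  have hba : b < a := by omega
  -- indexing into a single block φ n
  have hphi : ∀ n p : ℕ, p < 2*a - b → (φ n)[p]?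
      = some (if p = a-1 then 1 else if p = 2*a-b-1 then n+1 else 0) := by
    intro n p hp
    rw [hφ]
    have e1 : (List.replicate (a - 1) 0 ++ [1] ++ List.replicate (a - b - 1) 0 ++ [n + 1] : List ℕ)
        = List.replicate (a - 1) 0 ++ (1 :: (List.replicate (a - b - 1) 0 ++ [n + 1])) := by simp
    rw [e1, List.getElem?_append]
    rcases Nat.lt_or_ge p (a-1) with h1 | h1
    · rw [if_pos (by simpa using h1), List.getElem?_replicate, if_pos h1,
        if_neg (by omega), if_neg (by omega)]
    · rw [if_neg (by simpa using h1)]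
      simp only [List.length_replicate]
      rcases Nat.eq_or_lt_of_le h1 with h2 | h2
      · rw [← h2, Nat.sub_self, List.getElem?_cons_zero, if_pos rfl]
      · rw [show p - (a-1) = (p - a) + 1 by omega, List.getElem?_cons_succ,
          List.getElem?_append]
        rcases Nat.lt_or_ge (p - a) (a - b - 1) with h3 | h3
        · rw [if_pos (by simpa using h3), List.getElem?_replicate, if_pos h3,
            if_neg (by omega), if_neg (by omega)]
        · rw [if_neg (by simpa using h3)]
          simp only [List.length_replicate]
          rw [show p - a - (a - b - 1) = 0 by omega, List.getElem?_cons_zero,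
            if_neg (by omega), if_pos (by omega)]
  have hlenφ : ∀ n : ℕ, (φ n).length = 2*a - b := by
    intro n; rw [hφ]; simp; omega
  -- nonzero positions of morphApply φ w
  have hnz : ∀ w : List ℕ, ∀ p : ℕ, p < (morphApply φ w).length →
      (((morphApply φ w)[p]?).getD 0 ≠ 0 ↔
        (p % (2*a-b) = a-1 ∨ p % (2*a-b) = 2*a-b-1)) := by
    intro w
    induction w with
    | nil => intro p hp; simp [morphApply] at hp
    | cons n w ih =>
      intro p hp
      have hm : morphApply φ (n :: w) = φ n ++ morphApply φ w := by
        simp [morphApply]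
      rw [hm] at hp ⊢
      rw [List.getElem?_append]
      rcases Nat.lt_or_ge p (2*a-b) with h | h
      · rw [if_pos (by rw [hlenφ]; exact h), hphi n p h,
          Nat.mod_eq_of_lt h]
        split_ifs <;> simp <;> omega
      · rw [if_neg (by rw [hlenφ]; omega), hlenφ]
        have hp' : p - (2*a-b) < (morphApply φ w).length := by
          rw [List.length_append, hlenφ] at hp; omega
        rw [Nat.mod_eq_sub_mod (by omega : 2*a-b ≤ p)]
        exact ih (p - (2*a-b)) hp'
  -- helper: mod in a double window
  have hmr : ∀ x c : ℕ, x < 2*(2*a-b) → c < 2*a-b →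
      (x % (2*a-b) = c ↔ (x = c ∨ x = (2*a-b) + c)) := by
    intro x c hx hc
    rcases Nat.lt_or_ge x (2*a-b) with h | h
    · rw [Nat.mod_eq_of_lt h]; omega
    · rw [Nat.mod_eq_sub_mod h, Nat.mod_eq_of_lt (by omega)]; omega
  intro w f hfac hlen hpow
  obtain ⟨v, hv, ⟨k, hk⟩, hfv⟩ := hpow
  -- identify the shape of f
  have hdiv : a / b = 1 := by
    rw [Nat.div_eq_of_lt_le] <;> omega
  have hmoda : a % b = a - b := by
    rw [Nat.mod_eq_sub_mod (by omega), Nat.mod_eq_of_lt (by omega)]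
  rw [abPow, hdiv, hmoda, hk] at hfv
  have htk : b * k * (a - b) / b = k * (a-b) := by
    rw [Nat.mul_assoc, Nat.mul_div_cancel_left _ hb]
  rw [htk] at hfv
  have hjoin : (List.replicate 1 v).flatten = v := by simp
  rw [hjoin] at hfv
  -- k = 1
  have hk1 : k = 1 := by
    have hlf : f.length = v.length + min (k*(a-b)) v.length := by
      rw [hfv]; simp
    have hmin : min (k*(a-b)) v.length = k*(a-b) := by
      rw [hk]
      have : k*(a-b) ≤ b*k := by
        calc k*(a-b) ≤ k*b := Nat.mul_le_mul_left k (by omega)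
        _ = b*k := Nat.mul_comm k b
      omega
    have hka : k*a = k*b + k*(a-b) := by
      rw [← Nat.mul_add]; congr 1; omega
    have h0 : k ≠ 0 := by
      rintro rfl
      rw [Nat.mul_zero] at hk
      exact hv (List.length_eq_zero_iff.mp hk)
    nlinarith [hlen, hlf, hmin, hk, hka]
  rw [hk1, Nat.mul_one] at hk
  rw [hk1, Nat.one_mul] at hfv
  -- periodicity of f : f[j]? = f[j+b]? for j < a - b
  have hper : ∀ j : ℕ, j < a - b → f[j]? = f[j+b]? := by
    intro j hj
    rw [hfv, List.getElem?_append, List.getElem?_append]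
    rw [if_pos (by rw [hk]; omega), if_neg (by rw [hk]; omega), hk]
    rw [show j + b - b = j by omega, List.getElem?_take, if_pos hj]
  -- the factor position
  obtain ⟨s, t, hst⟩ := hfac
  set u := morphApply φ w with hu
  set i := s.length with hi
  have hul : s.length + f.length + t.length = u.length := by
    rw [← hst]; simp; omega
  have hget : ∀ j : ℕ, j < a → u[i+j]? = f[j]? := by
    intro j hj
    rw [← hst, List.append_assoc, List.getElem?_append_right (by omega : s.length ≤ i + j)]
    rw [show i + j - s.length = j by omega, List.getElem?_append, if_pos (by omega)]
  set L := 2*a - b with hL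
  set r := i % L with hr
  have hrlt : r < L := Nat.mod_lt _ (by omega)
  have hmodshift : ∀ j : ℕ, (i + j) % L = (r + j) % L := by
    intro j
    conv_lhs => rw [← Nat.div_add_mod i L]
    rw [Nat.add_assoc, Nat.mul_add_mod]
  -- the master equivalence
  have hP : ∀ j : ℕ, j < a →
      ((u[i+j]?).getD 0 ≠ 0 ↔
        (r + j = a-1 ∨ r + j = L + (a-1) ∨ r + j = L-1 ∨ r + j = L + (L-1))) := by
    intro j hj
    have hb1 : i + j < u.length := by omega
    rw [hnz w (i+j) hb1, hmodshift j]
    rw [hmr (r+j) (a-1) (by omega) (by omega), hmr (r+j) (L-1) (by omega) (by omega)]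
    tauto
  have H : ∀ j : ℕ, j < a - b →
      ((r + j = a-1 ∨ r + j = L + (a-1) ∨ r + j = L-1 ∨ r + j = L + (L-1)) ↔
       (r + (j+b) = a-1 ∨ r + (j+b) = L + (a-1) ∨ r + (j+b) = L-1 ∨ r + (j+b) = L + (L-1))) := by
    intro j hj
    rw [← hP j (by omega), ← hP (j+b) (by omega)]
    rw [hget j (by omega), hget (j+b) (by omega), hper j hj]
  -- arithmetic contradiction
  rcases Nat.lt_or_ge (a-1) r with hc | hc
  · have := (H (2*a-b-1-r) (by omega)).mp (by omega)
    omega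
  · rcases Nat.lt_or_ge r (a-b) with hd | hd
    · have := (H (a-1-r-b) (by omega)).mpr (by omega)
      omega
    · rcases Nat.lt_or_ge (2*a-2*b-1) r with he | he
      · have := (H (a-1-r) (by omega)).mp (by omega)
        omega
      · have := (H (2*a-2*b-1-r) (by omega)).mpr (by omega)
        omega
end

section
/- Let a ≥ 2 be an integer and let w = φ^∞(0) be the fixed point of φ(n) = 0^{a−1}·(n+1) on ℕ. Then w is a/b-power-free for every pair of relatively prime positive integers a, b with b ≥ 1 and the same numerator a satisfying a/b ≥ 2. Equivalently, for every nonempty word v with b ∣ |v|, the a/b-power v^{a/b} is not a factor of w. -/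
lemma abPow_succ (a b : ℕ) (hb : 0 < b) (h : b ≤ a) (v : List ℕ) :
    abPow a b v = v ++ abPow (a - b) b v := by
  have e1 : a / b = (a - b) / b + 1 := by
    have := Nat.add_div_right (a - b) hb
    rw [show a - b + b = a by omega] at this
    omega
  have e2 : a % b = (a - b) % b := by
    have := Nat.add_mod_right (a - b) b
    rw [show a - b + b = a by omega] at this
    omega
  rw [abPow, abPow, e1, e2, List.replicate_succ]
  simp [List.flatten, List.append_assoc]

lemma period_mod (u : ℕ → ℕ) (k c : ℕ) (hk : 0 < k)
    (hp : ∀ s, s + k < c → u s = u (s + k)) :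
    ∀ t, t < c → u t = u (t % k) := by
  intro t
  induction t using Nat.strong_induction_on with
  | _ t ih =>
    intro ht
    rcases lt_or_ge t k with h | h
    · rw [Nat.mod_eq_of_lt h]
    · have h1 : t - k + k = t := by omega
      have h2 := hp (t - k) (by omega)
      rw [h1] at h2
      have h3 := ih (t - k) (by omega) (by omega)
      have h4 : (t - k) % k = t % k := by
        conv_rhs => rw [← h1]
        rw [Nat.add_mod_right]
      rw [← h2, h3, h4]

lemma map_range_inj {m : ℕ} {f g : ℕ → ℕ} (h : (List.range m).map f = (List.range m).map g) :
    ∀ j, j < m → f j = g j := by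
  intro j hj
  have h2 := congrArg (fun l => l[j]?) h
  simpa [List.getElem?_map, List.getElem?_range, hj] using h2

lemma abPow_eq_map (b k : ℕ) (hb : 0 < b) (hk : b ∣ k) (u : ℕ → ℕ) :
    ∀ a, (∀ t, t < k * a / b → u t = u (t % k)) →
      abPow a b ((List.range k).map u) = (List.range (k * a / b)).map u := by
  intro a
  induction a using Nat.strong_induction_on with
  | _ a ih =>
    intro hu
    rcases lt_or_ge a b with h | h
    · have h0 : a / b = 0 := Nat.div_eq_of_lt h
      have hm : k * a / b ≤ k := by
        calc k * a / b ≤ k * b / b := Nat.div_le_div_right (Nat.mul_le_mul le_rfl h.le)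
          _ = k := Nat.mul_div_cancel _ hb
      rw [abPow, h0, Nat.mod_eq_of_lt h]
      simp only [List.replicate_zero, List.flatten_nil, List.nil_append, List.length_map,
        List.length_range]
      rw [← List.map_take, List.take_range, min_eq_left hm]
    · have hmle : k * (a - b) / b ≤ k * a / b :=
        Nat.div_le_div_right (Nat.mul_le_mul le_rfl (Nat.sub_le a b))
      have hm : k * (a - b) / b + k = k * a / b := by
        obtain ⟨e, he⟩ := hk
        subst he
        rw [show b * e * (a - b) = b * (e * (a - b)) by ring, Nat.mul_div_cancel_left _ hb,
          show b * e * a = b * (e * a) by ring, Nat.mul_div_cancel_left _ hb]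
        have h5 : e * a = e * (a - b) + e * b := by
          rw [← Nat.mul_add, show a - b + b = a by omega]
        rw [h5, Nat.mul_comm b e]
      rw [abPow_succ a b hb h, ih (a - b) (by omega) (fun t ht => hu t (lt_of_lt_of_le ht hmle)),
        show k * a / b = k + k * (a - b) / b by omega, List.range_add, List.map_append,
        List.map_map]
      congr 1
      apply List.map_congr_left
      intro t ht
      simp only [List.mem_range] at ht
      have e1 : u (k + t) = u ((k + t) % k) := hu (k + t) (by omega)
      have e2 : u t = u (t % k) := hu t (by omega)
      simp only [Function.comp_apply]
      rw [e1, e2, Nat.add_mod_left]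

lemma abPow_prefix (b : ℕ) (hb : 0 < b) (v : List ℕ) :
    ∀ a, abPow a b v <+: v ++ abPow a b v := by
  intro a
  induction a using Nat.strong_induction_on with
  | _ a ih =>
    rcases lt_or_ge a b with h | h
    · rw [abPow, Nat.div_eq_of_lt h]
      simp only [List.replicate_zero, List.flatten_nil, List.nil_append]
      exact (List.take_prefix _ _).trans (List.prefix_append _ _)
    · obtain ⟨t, htt⟩ := ih (a - b) (by omega)
      rw [abPow_succ a b hb h]
      exact ⟨t, by rw [List.append_assoc, htt]⟩


lemma abPow_length (a b : ℕ) (hb : 0 < b) (v : List ℕ) (c : ℕ) (hc : v.length = b * c) :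
    (abPow a b v).length = a * c := by
  rw [abPow]
  simp only [List.length_append, List.length_flatten, List.map_replicate, List.length_take, hc]
  have e1 : b * c * (a % b) / b = c * (a % b) := by
    rw [show b * c * (a % b) = b * (c * (a % b)) by ring, Nat.mul_div_cancel_left _ hb]
  have e2 : c * (a % b) ≤ b * c := by
    calc c * (a % b) ≤ c * b := Nat.mul_le_mul le_rfl (Nat.mod_lt a hb).le
      _ = b * c := Nat.mul_comm c b
  rw [e1, min_eq_left e2]
  have hsum : (List.replicate (a / b) (b * c)).sum = (a / b) * (b * c) := by
    simp [List.sum_replicate, smul_eq_mul]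
  rw [hsum]
  have := Nat.div_add_mod a b
  calc a / b * (b * c) + c * (a % b) = c * (b * (a / b) + a % b) := by ring
    _ = c * a := by rw [this]
    _ = a * c := Nat.mul_comm c a

theorem fixedPoint_abPowerFree_large (a : ℕ) (ha : 2 ≤ a) (w : ℕ → ℕ)
    (h0 : ∀ i r : ℕ, r ≤ a - 2 → w (a * i + r) = 0)
    (h1 : ∀ i : ℕ, w (a * i + (a - 1)) = w i + 1) :
    ∀ b : ℕ, 0 < b → Nat.Coprime a b → 2 * b ≤ a →
      ∀ v : List ℕ, v ≠ [] → b ∣ v.length → ¬ InfFactor w (abPow a b v) := by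
  intro b hb hcop hba
  -- nonzero letters sit exactly at positions ≡ a-1 mod a
  have hnz : ∀ p, w p ≠ 0 → p % a = a - 1 := by
    intro p hp
    by_contra hne
    have hlt : p % a < a := Nat.mod_lt p (by omega)
    have := Nat.div_add_mod p a
    have := h0 (p / a) (p % a) (by omega)
    rw [Nat.div_add_mod] at this
    exact hp this
  suffices H : ∀ N : ℕ, ∀ v : List ℕ, v.length ≤ N → v ≠ [] → b ∣ v.length →
      ¬ InfFactor w (abPow a b v) by
    intro v h1' h2'
    exact H v.length v le_rfl h1' h2'
  intro N
  induction N with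
  | zero =>
    intro v hvN hvne _ _
    exact hvne (List.length_eq_zero_iff.mp (by omega))
  | succ N ih =>
    intro v hvN hvne hvdvd hinf
    obtain ⟨i, hf⟩ := hinf
    obtain ⟨c, hc⟩ := hvdvd
    set n := v.length with hn
    have hn0 : 0 < n := List.length_pos_iff.mpr hvne
    have hc1 : 0 < c := by
      rcases Nat.eq_zero_or_pos c with h | h
      · subst h; simp at hc; omega
      · exact h
    have hnL : n ≤ a * c := by
      calc n = b * c := hc
        _ ≤ a * c := Nat.mul_le_mul (by omega) le_rfl
    have h2n : 2 * n ≤ a * c := by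
      calc 2 * n = (2 * b) * c := by rw [hc]; ring
        _ ≤ a * c := Nat.mul_le_mul hba le_rfl
    have hL : (abPow a b v).length = a * c := abPow_length a b hb v c hc
    have habF : abPow a b v = (List.range (a * c)).map (fun j => w (i + j)) := by
      rw [← hL]; exact hf
    have hsplit : abPow a b v = v ++ abPow (a - b) b v := abPow_succ a b hb (by omega) v
    have hMlen : (abPow (a - b) b v).length = a * c - n := by
      rw [abPow_length (a - b) b hb v c hc, Nat.sub_mul, hc]
    have hFsplit : (List.range (a * c)).map (fun j => w (i + j)) =
        (List.range n).map (fun j => w (i + j)) ++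
        (List.range (a * c - n)).map (fun j => w (i + (n + j))) := by
      conv_lhs => rw [show a * c = n + (a * c - n) by omega]
      rw [List.range_add, List.map_append, List.map_map]
      rfl
    have hMfromF1 : abPow (a - b) b v =
        (List.range (a * c - n)).map (fun j => w (i + (n + j))) := by
      have h2 : v ++ abPow (a - b) b v =
          (List.range n).map (fun j => w (i + j)) ++
          (List.range (a * c - n)).map (fun j => w (i + (n + j))) := by
        rw [← hsplit, habF, hFsplit]
      exact (List.append_inj h2 (by simp [hn])).2
    have hMfromF2 : abPow (a - b) b v = (List.range (a * c - n)).map (fun j => w (i + j)) := by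
      have hpre : abPow (a - b) b v <+: abPow a b v := by
        rw [hsplit]; exact abPow_prefix b hb v (a - b)
      have htake := List.prefix_iff_eq_take.mp hpre
      rw [hMlen, habF, ← List.map_take, List.take_range, min_eq_left (by omega)] at htake
      exact htake
    have hper : ∀ j, j + n < a * c → w (i + j) = w (i + j + n) := by
      intro j hj
      have := map_range_inj (hMfromF2.symm.trans hMfromF1) j (by omega)
      rw [show i + (n + j) = i + j + n by omega] at this
      exact this
    -- the first nonzero position in the factor
    have hiq : a * (i / a) + i % a = i := Nat.div_add_mod i a
    have hra : i % a < a := Nat.mod_lt i (by omega)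
    set j0 := a - 1 - i % a with hj0def
    have hij0 : i + j0 = a * (i / a) + (a - 1) := by
      have h5 := hiq
      set t := a * (i / a)
      omega
    have hj0a : j0 < a := by omega
    have haac : a ≤ a * c := Nat.le_mul_of_pos_right a hc1
    have hw0 : w (i + j0) ≠ 0 := by rw [hij0, h1]; omega
    -- a divides n
    have hadvd : a ∣ n := by
      rcases lt_or_ge (j0 + n) (a * c) with hlt | hge
      · have hp2 := hper j0 (by omega)
        have hw2 : w (i + j0 + n) ≠ 0 := by rw [← hp2]; exact hw0
        have e1 : (i + j0) % a = a - 1 := hnz _ hw0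
        have e2 : (i + j0 + n) % a = a - 1 := hnz _ hw2
        have hmeq : (i + j0) % a = (i + j0 + n) % a := by omega
        have := (Nat.modEq_iff_dvd' (Nat.le_add_right _ n)).mp hmeq
        simpa using this
      · have hnn : n ≤ j0 := by omega
        have hp2 := hper (j0 - n) (by omega)
        rw [show i + (j0 - n) + n = i + j0 by omega] at hp2
        have hw2 : w (i + (j0 - n)) ≠ 0 := by rw [hp2]; exact hw0
        have e1 : (i + (j0 - n)) % a = a - 1 := hnz _ hw2
        have e2 : (i + j0) % a = a - 1 := hnz _ hw0
        have hmeq : (i + (j0 - n)) % a = (i + j0) % a := by omega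
        have := (Nat.modEq_iff_dvd' (by omega)).mp hmeq
        rw [show i + j0 - (i + (j0 - n)) = n by omega] at this
        exact this
    have habn : a * b ∣ n := Nat.Coprime.mul_dvd_of_dvd_of_dvd hcop hadvd ⟨c, hc⟩
    obtain ⟨d, hd⟩ := habn
    have hd1 : 0 < d := by
      rcases Nat.eq_zero_or_pos d with h | h
      · subst h; simp at hd; omega
      · exact h
    set k := b * d with hkdef
    have hk0 : 0 < k := Nat.mul_pos hb hd1
    have hkn : n = a * k := by rw [hd]; ring
    have hklt : k < n := by
      have : 2 * k ≤ a * k := Nat.mul_le_mul ha le_rfl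
      omega
    have hca : c = a * d := by
      have h5 : b * c = b * (a * d) := by rw [← hc, hd]; ring
      exact Nat.eq_of_mul_eq_mul_left hb h5
    set q0 := i / a with hq0
    -- the projected word has period k on the window [q0, q0+c)
    have hwper : ∀ s, s + k < c → w (q0 + s) = w (q0 + s + k) := by
      intro s hs
      have e1 : i + (j0 + a * s) = a * (q0 + s) + (a - 1) := by
        rw [Nat.mul_add]
        have h5 := hij0
        set t1 := a * s
        set t2 := a * q0
        omega
      have e2 : i + (j0 + a * s) + n = a * (q0 + s + k) + (a - 1) := by
        rw [hkn, Nat.mul_add, Nat.mul_add]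
        have h5 := hij0
        set t1 := a * s
        set t2 := a * q0
        set t3 := a * k
        omega
      have hb1 : j0 + a * s + n < a * c := by
        have h3 : a * (s + k) + a ≤ a * c := by
          calc a * (s + k) + a = a * (s + k + 1) := by ring
            _ ≤ a * c := Nat.mul_le_mul le_rfl (by omega)
        rw [Nat.mul_add] at h3
        rw [hkn]
        set t1 := a * s
        set t3 := a * k
        omega
      have hp2 := hper (j0 + a * s) hb1
      rw [e1] at hp2
      have e3 : a * (q0 + s) + (a - 1) + n = a * (q0 + s + k) + (a - 1) := by omega
      rw [e3] at hp2
      rw [h1, h1] at hp2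
      omega
    have hmodw : ∀ t, t < c → w (q0 + t) = w (q0 + t % k) :=
      period_mod (fun t => w (q0 + t)) k c hk0
        (fun s hs => by have := hwper s hs; simpa [Nat.add_assoc] using this)
    have hk_ab : k * a / b = c := by
      rw [show k * a = b * (a * d) by rw [hkdef]; ring, Nat.mul_div_cancel_left _ hb, hca]
    have hrec : abPow a b ((List.range k).map (fun t => w (q0 + t))) =
        (List.range c).map (fun t => w (q0 + t)) := by
      have := abPow_eq_map b k hb ⟨d, rfl⟩ (fun t => w (q0 + t)) a
        (fun t ht => hmodw t (by rwa [hk_ab] at ht))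
      rwa [hk_ab] at this
    set v' : List ℕ := (List.range k).map (fun t => w (q0 + t)) with hv'
    have hlen' : v'.length = k := by simp [hv']
    have hinf' : InfFactor w (abPow a b v') := by
      refine ⟨q0, ?_⟩
      rw [abPow_length a b hb v' d (by rw [hlen']), ← hca, hrec]
    exact ih v' (by omega) (by
        apply List.ne_nil_of_length_pos
        rw [hlen']; exact hk0)
      (by rw [hlen']; exact ⟨d, rfl⟩) hinf'
end

section
/- Let a, b be relatively prime positive integers with 1 < a/b < 2 and let w be the lexicographically least a/b-power-free infinite word over ℕ (assumed to exist). For each letter value n ≥ 1 occurring in w, let i_n denote the position of the first occurrence of n in w. If for some n ≥ 1 there exist distinct positive integers m_0, m_1, …, m_{n−1} such that for each 0 ≤ c ≤ n−1 the letter c occurs at position i_n − m_c·b in w, then i_n − i_{n−1} ≥ n whenever additionally max(m_0,…,m_{n−1}) = m_{n−1} (first case of the argument). -/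
/-- Lexicographic order on infinite words over ℕ. -/
def SeqLexLe (w w' : ℕ → ℕ) : Prop :=
  ∀ i : ℕ, (∀ j < i, w j = w' j) → w i ≤ w' i

theorem first_occurrence_gap (a b : ℕ) (ha : 0 < a) (hb : 0 < b)
    (hcop : Nat.Coprime a b) (h1 : b < a) (h2 : a < 2 * b)
    (w : ℕ → ℕ) (hfree : AbPowerFreeSeq a b w)
    (hleast : ∀ w' : ℕ → ℕ, AbPowerFreeSeq a b w' → SeqLexLe w w')
    (n : ℕ) (hn : 1 ≤ n)
    (iN iP : ℕ) (hiN : w iN = n ∧ ∀ j < iN, w j ≠ n)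
    (hiP : w iP = n - 1 ∧ ∀ j < iP, w j ≠ n - 1)
    (m : ℕ → ℕ) (hmpos : ∀ c < n, 0 < m c)
    (hminj : ∀ c < n, ∀ c' < n, m c = m c' → c = c')
    (hocc : ∀ c < n, m c * b ≤ iN ∧ w (iN - m c * b) = c)
    (hmax : ∀ c < n, m c ≤ m (n - 1)) :
    iP + n ≤ iN := by
  have hn1 : n - 1 < n := by omega
  obtain ⟨hle, hw⟩ := hocc (n - 1) hn1
  have hiPle : iP ≤ iN - m (n - 1) * b := by
    by_contra h
    exact hiP.2 _ (by omega) hw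
  have hmN : n ≤ m (n - 1) := by
    have hsub : Finset.image m (Finset.range n) ⊆ Finset.Icc 1 (m (n - 1)) := by
      intro x hx
      simp only [Finset.mem_image, Finset.mem_range] at hx
      obtain ⟨c, hc, rfl⟩ := hx
      exact Finset.mem_Icc.2 ⟨hmpos c hc, hmax c hc⟩
    have hcard : (Finset.image m (Finset.range n)).card = n := by
      rw [Finset.card_image_of_injOn, Finset.card_range]
      intro x hx y hy
      exact hminj x (Finset.mem_range.1 hx) y (Finset.mem_range.1 hy)
    have h2 := Finset.card_le_card hsub
    rw [hcard, Nat.card_Icc] at h2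
    omega
  have hmb : m (n - 1) ≤ m (n - 1) * b := Nat.le_mul_of_pos_right _ hb
  omega
end
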